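/- For positive definite matrices A, B, there exists a unitary matrix U such that A ♮ B = U (A^{1/2} B A^{1/2})^{1/2} U*. In particular, the eigenvalues of A ♮ B are the positive square roots of the eigenvalues of AB. -/

import Mathlib

open Matrix
open scoped ComplexOrder

noncomputable def mpow {m : Type*} [Fintype m] [DecidableEq m]
    (A : Matrix m m ℂ) (t : ℝ) : Matrix m m ℂ :=
  if h : A.IsHermitian then
    (h.eigenvectorUnitary : Matrix m m ℂ) *
      Matrix.diagonal (fun i => ((h.eigenvalues i ^ t : ℝ) : ℂ)) *
      star (h.eigenvectorUnitary : Matrix m m ℂ)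
  else A

/-- t-metric geometric mean `A ♯ₜ B`. -/
noncomputable def msharp {m : Type*} [Fintype m] [DecidableEq m]
    (A B : Matrix m m ℂ) (t : ℝ) : Matrix m m ℂ :=
  mpow A (1/2) * mpow (mpow A (-(1/2)) * B * mpow A (-(1/2))) t * mpow A (1/2)

/-- t-spectral geometric mean `A ♮ₜ B`. -/
noncomputable def mnat {m : Type*} [Fintype m] [DecidableEq m]
    (A B : Matrix m m ℂ) (t : ℝ) : Matrix m m ℂ :=
  mpow (msharp A⁻¹ B (1/2)) t * A * mpow (msharp A⁻¹ B (1/2)) t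

/-- Eigenvalues in non-increasing order (junk value `0` if not Hermitian). -/
noncomputable def eigsDesc {n : ℕ} (A : Matrix (Fin n) (Fin n) ℂ) : Fin n → ℝ :=
  if h : A.IsHermitian then (fun i => h.eigenvalues (Tuple.sort h.eigenvalues i.rev)) else 0

/-- `x` is log-majorized by `y` (both listed in non-increasing order). -/
def LogMaj {n : ℕ} (x y : Fin n → ℝ) : Prop :=
  (∀ k : ℕ, ∏ i ∈ Finset.univ.filter (fun i : Fin n => (i : ℕ) < k), x i ≤
      ∏ i ∈ Finset.univ.filter (fun i : Fin n => (i : ℕ) < k), y i) ∧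
    ∏ i, x i = ∏ i, y i

/-- k-th compound matrix. -/
noncomputable def compound {n : ℕ} (k : ℕ) (A : Matrix (Fin n) (Fin n) ℂ) :
    Matrix {s : Finset (Fin n) // s.card = k} {s : Finset (Fin n) // s.card = k} ℂ :=
  fun s t => (A.submatrix (fun i => (s.1.orderIsoOfFin s.2 i : Fin n))
    (fun i => (t.1.orderIsoOfFin t.2 i : Fin n))).det


variable {m : Type*} [Fintype m] [DecidableEq m]

lemma mpow_of_isHermitian {A : Matrix m m ℂ} (hA : A.IsHermitian) (t : ℝ) :
    mpow A t = (hA.eigenvectorUnitary : Matrix m m ℂ) *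
      Matrix.diagonal (fun i => ((hA.eigenvalues i ^ t : ℝ) : ℂ)) *
      star (hA.eigenvectorUnitary : Matrix m m ℂ) := by
  rw [mpow, dif_pos hA]

lemma posDef_conj_same {A : Matrix m m ℂ} (hA : A.PosDef) (C : Matrix m m ℂ) (hC : IsUnit C) :
    (Cᴴ * A * C).PosDef := by
  refine Matrix.PosDef.of_dotProduct_mulVec_pos (Matrix.isHermitian_conjTranspose_mul_mul _ hA.1) fun x hx => ?_
  have hinj : Function.Injective (C.mulVec) := Matrix.mulVec_injective_iff_isUnit.mpr hC
  have hx' : C *ᵥ x ≠ 0 := fun h => hx (hinj (by simpa using h))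
  simpa only [star_mulVec, dotProduct_mulVec, vecMul_vecMul] using hA.dotProduct_mulVec_pos hx'

lemma posDef_conj_same' {A : Matrix m m ℂ} (hA : A.PosDef) (C : Matrix m m ℂ) (hC : IsUnit C) :
    (C * A * Cᴴ).PosDef := by
  have hC' : IsUnit Cᴴ := by
    rw [Matrix.isUnit_iff_isUnit_det] at hC ⊢
    rw [Matrix.det_conjTranspose]
    exact hC.star
  simpa only [conjTranspose_conjTranspose] using posDef_conj_same hA Cᴴ hC'

lemma mpow_posDef {A : Matrix m m ℂ} (hA : A.PosDef) (t : ℝ) : (mpow A t).PosDef := by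
  rw [mpow_of_isHermitian hA.1 t, Matrix.star_eq_conjTranspose]
  refine posDef_conj_same' ?_ _ ?_
  · refine Matrix.PosDef.diagonal fun i => ?_
    have := hA.eigenvalues_pos i
    exact_mod_cast Real.rpow_pos_of_pos this t
  · exact ⟨Unitary.toUnits hA.1.eigenvectorUnitary, rfl⟩

lemma mpow_mul_mpow {A : Matrix m m ℂ} (hA : A.PosDef) (s t : ℝ) :
    mpow A s * mpow A t = mpow A (s + t) := by
  rw [mpow_of_isHermitian hA.1 s, mpow_of_isHermitian hA.1 t, mpow_of_isHermitian hA.1 (s + t)]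
  have hU : star (hA.1.eigenvectorUnitary : Matrix m m ℂ) *
      (hA.1.eigenvectorUnitary : Matrix m m ℂ) = 1 :=
    (Matrix.mem_unitaryGroup_iff').mp (hA.1.eigenvectorUnitary).2
  have hD : (Matrix.diagonal (fun i => ((hA.1.eigenvalues i ^ s : ℝ) : ℂ))) *
      (Matrix.diagonal (fun i => ((hA.1.eigenvalues i ^ t : ℝ) : ℂ))) =
      Matrix.diagonal (fun i => ((hA.1.eigenvalues i ^ (s + t) : ℝ) : ℂ)) := by
    rw [Matrix.diagonal_mul_diagonal]
    refine congrArg Matrix.diagonal (funext fun i => ?_)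
    rw [← Complex.ofReal_mul, ← Real.rpow_add (hA.eigenvalues_pos i)]
  calc (hA.1.eigenvectorUnitary : Matrix m m ℂ) *
        Matrix.diagonal (fun i => ((hA.1.eigenvalues i ^ s : ℝ) : ℂ)) *
        star (hA.1.eigenvectorUnitary : Matrix m m ℂ) *
        ((hA.1.eigenvectorUnitary : Matrix m m ℂ) *
        Matrix.diagonal (fun i => ((hA.1.eigenvalues i ^ t : ℝ) : ℂ)) *
        star (hA.1.eigenvectorUnitary : Matrix m m ℂ))
      = (hA.1.eigenvectorUnitary : Matrix m m ℂ) *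
        (Matrix.diagonal (fun i => ((hA.1.eigenvalues i ^ s : ℝ) : ℂ)) *
        ((star (hA.1.eigenvectorUnitary : Matrix m m ℂ) *
        (hA.1.eigenvectorUnitary : Matrix m m ℂ)) *
        (Matrix.diagonal (fun i => ((hA.1.eigenvalues i ^ t : ℝ) : ℂ)) *
        star (hA.1.eigenvectorUnitary : Matrix m m ℂ)))) := by
        simp only [Matrix.mul_assoc]
    _ = _ := by rw [hU, one_mul, ← Matrix.mul_assoc
          (Matrix.diagonal (fun i => ((hA.1.eigenvalues i ^ s : ℝ) : ℂ))), hD,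
          ← Matrix.mul_assoc]

lemma mpow_one' {A : Matrix m m ℂ} (hA : A.IsHermitian) : mpow A 1 = A := by
  rw [mpow_of_isHermitian hA 1]
  simp only [Real.rpow_one]
  exact (hA.spectral_theorem).symm

lemma mpow_zero' {A : Matrix m m ℂ} (hA : A.IsHermitian) : mpow A 0 = 1 := by
  rw [mpow_of_isHermitian hA 0]
  simp only [Real.rpow_zero, Complex.ofReal_one, Matrix.diagonal_one, Matrix.mul_one]
  exact (Matrix.mem_unitaryGroup_iff).mp (hA.eigenvectorUnitary).2

lemma mpow_half_mul_self {A : Matrix m m ℂ} (hA : A.PosDef) :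
    mpow A (1/2) * mpow A (1/2) = A := by
  rw [mpow_mul_mpow hA]
  norm_num
  exact mpow_one' hA.1

lemma mpow_neg_half_eq_inv {A : Matrix m m ℂ} (hA : A.PosDef) :
    mpow A (-(1/2)) = (mpow A (1/2))⁻¹ := by
  refine (Matrix.inv_eq_left_inv ?_).symm
  rw [mpow_mul_mpow hA]
  norm_num
  exact mpow_zero' hA.1

lemma mpow_half_of_inv {A : Matrix m m ℂ} (hA : A.PosDef) :
    mpow A⁻¹ (1/2) = (mpow A (1/2))⁻¹ := by
  have hAi : A⁻¹.PosDef := hA.inv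
  open scoped MatrixOrder in
  have h1 : mpow A⁻¹ (1/2) = CFC.sqrt A⁻¹ := by
    refine ((CFC.sqrt_eq_iff _ _ hAi.posSemidef.nonneg
      (mpow_posDef hAi (1/2)).posSemidef.nonneg).mpr ?_).symm
    rw [mpow_half_mul_self hAi]
  open scoped MatrixOrder in
  have h2 : (mpow A (1/2))⁻¹ = CFC.sqrt A⁻¹ := by
    refine ((CFC.sqrt_eq_iff _ _ hAi.posSemidef.nonneg
      ((mpow_posDef hA (1/2)).inv).posSemidef.nonneg).mpr ?_).symm
    rw [← Matrix.mul_inv_rev, mpow_half_mul_self hA]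
  rw [h1, h2]


theorem mnat_unitary_conj {n : ℕ} (A B : Matrix (Fin n) (Fin n) ℂ)
    (hA : A.PosDef) (hB : B.PosDef) :
    ∃ U : Matrix.unitaryGroup (Fin n) ℂ,
      mnat A B (1/2) =
        (U : Matrix (Fin n) (Fin n) ℂ) * mpow (mpow A (1/2) * B * mpow A (1/2)) (1/2) *
          star (U : Matrix (Fin n) (Fin n) ℂ) ∧
      spectrum ℂ (mnat A B (1/2) ^ 2) = spectrum ℂ (A * B) := by
  simp only [mnat]
  set R := mpow A (1/2) with hRdef
  set T := mpow (R * B * R) (1/2) with hTdef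
  set S := msharp A⁻¹ B (1/2) with hSdef
  set Q := mpow S (1/2) with hQdef
  -- basic facts about R
  have hR : R.PosDef := by rw [hRdef]; exact mpow_posDef hA _
  have hRdet : IsUnit R.det := hR.det_pos.ne'.isUnit
  have hRR : R * R = A := by rw [hRdef]; exact mpow_half_mul_self hA
  have hRRi : R * R⁻¹ = 1 := Matrix.mul_nonsing_inv _ hRdet
  have hRiR : R⁻¹ * R = 1 := Matrix.nonsing_inv_mul _ hRdet
  have cR1 : ∀ C : Matrix (Fin n) (Fin n) ℂ, R * (R⁻¹ * C) = C := fun C => by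
    rw [← Matrix.mul_assoc, hRRi, one_mul]
  have cR2 : ∀ C : Matrix (Fin n) (Fin n) ℂ, R⁻¹ * (R * C) = C := fun C => by
    rw [← Matrix.mul_assoc, hRiR, one_mul]
  -- T
  have hRBR : (R * B * R).PosDef := by
    have h := posDef_conj_same' hB R hR.isUnit
    rwa [hR.isHermitian.eq] at h
  have hT : T.PosDef := by rw [hTdef]; exact mpow_posDef hRBR _
  have hTT : T * T = R * B * R := by rw [hTdef]; exact mpow_half_mul_self hRBR
  -- S
  have e1 : mpow A⁻¹ (1/2) = R⁻¹ := by rw [hRdef]; exact mpow_half_of_inv hA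
  have e2 : mpow A⁻¹ (-(1/2)) = R := by
    have hdet : IsUnit (mpow A (1/2)).det := (mpow_posDef hA _).det_pos.ne'.isUnit
    rw [hRdef, mpow_neg_half_eq_inv hA.inv, mpow_half_of_inv hA,
      Matrix.nonsing_inv_nonsing_inv _ hdet]
  have hSeq : S = R⁻¹ * T * R⁻¹ := by
    rw [hSdef, hTdef]
    simp only [msharp]
    rw [e2, e1]
  have hS : S.PosDef := by
    rw [hSeq]
    have h := posDef_conj_same' hT R⁻¹ hR.inv.isUnit
    rwa [hR.inv.isHermitian.eq] at h
  -- Q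
  have hQ : Q.PosDef := by rw [hQdef]; exact mpow_posDef hS _
  have hQdet : IsUnit Q.det := hQ.det_pos.ne'.isUnit
  have hQQ : Q * Q = S := by rw [hQdef]; exact mpow_half_mul_self hS
  have hQQi : Q * Q⁻¹ = 1 := Matrix.mul_nonsing_inv _ hQdet
  -- M = Q * A * Q
  have hM : (Q * A * Q).PosDef := by
    have h := posDef_conj_same' hA Q hQ.isUnit
    rwa [hQ.isHermitian.eq] at h
  -- N = sqrt of M
  set N := mpow (Q * A * Q) (1/2) with hNdef
  have hN : N.PosDef := by rw [hNdef]; exact mpow_posDef hM _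
  have hNdet : IsUnit N.det := hN.det_pos.ne'.isUnit
  have hNN : N * N = Q * A * Q := by rw [hNdef]; exact mpow_half_mul_self hM
  have hNNi : N * N⁻¹ = 1 := Matrix.mul_nonsing_inv _ hNdet
  have hNiN : N⁻¹ * N = 1 := Matrix.nonsing_inv_mul _ hNdet
  have hNistar : star N⁻¹ = N⁻¹ := by
    rw [Matrix.star_eq_conjTranspose, Matrix.conjTranspose_nonsing_inv, hN.isHermitian.eq]
  -- X = R * Q, star X = Q * R
  have hXsX : (Q * R) * (R * Q) = Q * A * Q := by
    rw [Matrix.mul_assoc Q R (R * Q), ← Matrix.mul_assoc R R Q, hRR, ← Matrix.mul_assoc]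
  have hXXs : (R * Q) * (Q * R) = T := by
    rw [Matrix.mul_assoc R Q (Q * R), ← Matrix.mul_assoc Q Q R, hQQ, hSeq]
    calc R * (R⁻¹ * T * R⁻¹ * R) = R * (R⁻¹ * (T * (R⁻¹ * R))) := by
          simp only [Matrix.mul_assoc]
      _ = T := by rw [hRiR, mul_one, cR1]
  have hstarQR : star (Q * R) = R * Q := by
    rw [StarMul.star_mul, Matrix.star_eq_conjTranspose, Matrix.star_eq_conjTranspose,
      hQ.isHermitian.eq, hR.isHermitian.eq]
  -- the unitary
  set U0 := N⁻¹ * (Q * R) with hU0def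
  have hstarU0 : star U0 = (R * Q) * N⁻¹ := by
    rw [hU0def, StarMul.star_mul, hstarQR, hNistar]
  have hXsXN : (Q * R) * (R * Q) = N * N := hXsX.trans hNN.symm
  have hmem : U0 * star U0 = 1 := by
    rw [hstarU0, hU0def]
    calc N⁻¹ * (Q * R) * ((R * Q) * N⁻¹)
        = N⁻¹ * (((Q * R) * (R * Q)) * N⁻¹) := by simp only [Matrix.mul_assoc]
      _ = N⁻¹ * ((N * N) * N⁻¹) := by rw [hXsXN]
      _ = N⁻¹ * (N * (N * N⁻¹)) := by simp only [Matrix.mul_assoc]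
      _ = 1 := by rw [hNNi, mul_one, hNiN]
  refine ⟨⟨U0, Matrix.mem_unitaryGroup_iff.mpr hmem⟩, ?_, ?_⟩
  · -- Q * A * Q = U0 * T * star U0
    show Q * A * Q = U0 * T * star U0
    have : U0 * T * star U0 = Q * A * Q := by
      rw [hstarU0, hU0def, ← hXXs]
      calc N⁻¹ * (Q * R) * ((R * Q) * (Q * R)) * ((R * Q) * N⁻¹)
          = N⁻¹ * (((Q * R) * (R * Q)) * (((Q * R) * (R * Q)) * N⁻¹)) := by
            simp only [Matrix.mul_assoc]
        _ = N⁻¹ * ((N * N) * ((N * N) * N⁻¹)) := by rw [hXsXN]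
        _ = N⁻¹ * (N * (N * (N * (N * N⁻¹)))) := by simp only [Matrix.mul_assoc]
        _ = N⁻¹ * (N * (N * N)) := by rw [hNNi, mul_one]
        _ = ((N⁻¹ * N) * N) * N := by simp only [Matrix.mul_assoc]
        _ = N * N := by rw [hNiN, one_mul]
        _ = Q * A * Q := hNN
    exact this.symm
  · -- spectrum
    have hSAS : S * A * S = B := by
      rw [hSeq, ← hRR]
      calc R⁻¹ * T * R⁻¹ * (R * R) * (R⁻¹ * T * R⁻¹)
          = R⁻¹ * (T * (T * R⁻¹)) := by simp only [Matrix.mul_assoc, cR1, cR2]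
        _ = R⁻¹ * ((R * B * R) * R⁻¹) := by rw [← Matrix.mul_assoc T T, hTT]
        _ = B := by
            simp only [Matrix.mul_assoc, cR2]
            rw [hRRi, mul_one]
    have hSQi : S * Q⁻¹ = Q := by rw [← hQQ, Matrix.mul_assoc, hQQi, mul_one]
    have hM2 : (Q * A * Q) * (Q * A * Q) = Q * (A * B) * Q⁻¹ := by
      calc (Q * A * Q) * (Q * A * Q)
          = Q * (A * ((Q * Q) * (A * Q))) := by simp only [Matrix.mul_assoc]
        _ = Q * (A * (S * (A * Q))) := by rw [hQQ]
        _ = Q * (A * (S * (A * (S * Q⁻¹)))) := by rw [hSQi]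
        _ = Q * (A * (S * A * S)) * Q⁻¹ := by simp only [Matrix.mul_assoc]
        _ = Q * (A * B) * Q⁻¹ := by rw [hSAS]
    show spectrum ℂ ((Q * A * Q) ^ 2) = spectrum ℂ (A * B)
    rw [pow_two, hM2, ← hQ.isUnit.unit_spec, ← Matrix.coe_units_inv]
    exact spectrum.units_conjugate
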